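/- The maximum over (n-1)-dimensional subspaces L of ℝ^n of |sign(L)| equals 3^n - 2(2^n - 1), and the minimum equals 3^{n-1}, for n ≥ 2. -/

import Mathlib

open Matrix

noncomputable section

def signVec {n : ℕ} (x : Fin n → ℝ) : Fin n → SignType := fun i => SignType.sign (x i)

def signSet {n : ℕ} (L : Submodule ℝ (Fin n → ℝ)) : Set (Fin n → SignType) :=
  signVec '' (L : Set (Fin n → ℝ))

def IsRationalVec {n : ℕ} (v : Fin n → ℝ) : Prop := ∀ i, ∃ q : ℚ, v i = (q : ℝ)

def IsRationalSubspace {n : ℕ} (K : Submodule ℝ (Fin n → ℝ)) : Prop :=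
  ∃ s : Set (Fin n → ℝ), (∀ v ∈ s, IsRationalVec v) ∧ Submodule.span ℝ s = K

def IsRationalMatrix {m n : ℕ} (B : Matrix (Fin m) (Fin n) ℝ) : Prop :=
  ∀ i j, ∃ q : ℚ, B i j = (q : ℝ)

def mr {m n : ℕ} (A : Matrix (Fin m) (Fin n) SignType) : ℕ :=
  sInf {r | ∃ B : Matrix (Fin m) (Fin n) ℝ, (∀ i j, SignType.sign (B i j) = A i j) ∧ B.rank = r}

def SignPerp {n : ℕ} (c x : Fin n → SignType) : Prop :=
  (∀ i, c i = 0 ∨ x i = 0) ∨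
  (∃ i j, c i = x i ∧ c i ≠ 0 ∧ c j = -(x j) ∧ c j ≠ 0)
-- the linear functional v ↦ ∑ x i * v i
def dotF {n : ℕ} (x : Fin n → ℝ) : (Fin n → ℝ) →ₗ[ℝ] ℝ where
  toFun v := ∑ i, x i * v i
  map_add' u v := by simp [mul_add, Finset.sum_add_distrib]
  map_smul' c v := by simp [Finset.mul_sum]; ring_nf; simp [mul_comm, mul_left_comm]

def Scond {n : ℕ} (x : Fin n → ℝ) (s : Fin n → SignType) : Prop :=
  (∀ i, x i ≠ 0 → s i = 0) ∨
  ∃ i j, s i = SignType.sign (x i) ∧ s i ≠ 0 ∧ s j = -SignType.sign (x j) ∧ s j ≠ 0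

lemma sign_coe_signType (s : SignType) : SignType.sign ((s : ℝ)) = s := by
  cases s <;> simp

lemma mem_signSet_ker {n : ℕ} (x : Fin n → ℝ) (s : Fin n → SignType) :
    s ∈ signSet (LinearMap.ker (dotF x)) ↔ Scond x s := by
  constructor
  · rintro ⟨v, hv, rfl⟩
    simp only [SetLike.mem_coe, LinearMap.mem_ker, dotF, LinearMap.coe_mk, AddHom.coe_mk] at hv
    by_cases h1 : ∀ i, x i ≠ 0 → SignType.sign (v i) = 0
    · exact Or.inl h1
    · push_neg at h1
      obtain ⟨i0, hx0, hs0⟩ := h1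
      rw [sign_ne_zero] at hs0
      have hterm : x i0 * v i0 ≠ 0 := mul_ne_zero hx0 hs0
      have hpos : ∃ i, 0 < x i * v i := by
        by_contra h
        push_neg at h
        have := (Finset.sum_eq_zero_iff_of_nonpos (fun i _ => h i)).1 hv i0 (Finset.mem_univ _)
        exact hterm this
      have hneg : ∃ j, x j * v j < 0 := by
        by_contra h
        push_neg at h
        have := (Finset.sum_eq_zero_iff_of_nonneg (fun i _ => h i)).1 hv i0 (Finset.mem_univ _)
        exact hterm this
      obtain ⟨i, hi⟩ := hpos
      obtain ⟨j, hj⟩ := hneg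
      refine Or.inr ⟨i, j, ?_, ?_, ?_, ?_⟩
      · rcases mul_pos_iff.1 hi with ⟨h1, h2⟩ | ⟨h1, h2⟩
        · rw [signVec, sign_pos h2, sign_pos h1]
        · rw [signVec, sign_neg h2, sign_neg h1]
      · rcases mul_pos_iff.1 hi with ⟨h1, h2⟩ | ⟨h1, h2⟩
        · simp [signVec, sign_pos h2]
        · simp [signVec, sign_neg h2]
      · rcases mul_neg_iff.1 hj with ⟨h1, h2⟩ | ⟨h1, h2⟩
        · simp [signVec, sign_neg h2, sign_pos h1]
        · simp [signVec, sign_pos h2, sign_neg h1]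
      · rcases mul_neg_iff.1 hj with ⟨h1, h2⟩ | ⟨h1, h2⟩
        · simp [signVec, sign_neg h2]
        · simp [signVec, sign_pos h2]
  · rintro (h1 | ⟨i, j, hi, hi0, hj, hj0⟩)
    · refine ⟨fun i => (s i : ℝ), ?_, ?_⟩
      · simp only [SetLike.mem_coe, LinearMap.mem_ker, dotF, LinearMap.coe_mk, AddHom.coe_mk]
        apply Finset.sum_eq_zero
        intro i _
        by_cases hx : x i = 0
        · simp [hx]
        · simp [h1 i hx]
      · funext i; exact sign_coe_signType (s i)
    · have hij : i ≠ j := by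
        rintro rfl
        rw [hi] at hj
        have := SignType.neg_eq_self_iff.1 hj.symm
        rw [hi] at hi0; exact hi0 this
      have hxi : x i ≠ 0 := by rw [hi] at hi0; exact sign_ne_zero.1 hi0
      have hxj : x j ≠ 0 := by
        rw [hj] at hj0; simpa [sign_ne_zero] using fun h => hj0 (by simp [h])
      set p : ℝ := x i * ((s i : ℝ)) with hp
      set q : ℝ := -(x j * ((s j : ℝ))) with hq
      have hsp : (0:ℝ) < p := by
        rw [hp, hi]; push_cast; rw [self_mul_sign]; exact abs_pos.2 hxi
      have hsq : (0:ℝ) < q := by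
        rw [hq, hj]; push_cast; rw [mul_neg, neg_neg, self_mul_sign]; exact abs_pos.2 hxj
      set R : ℝ := ∑ k ∈ Finset.univ \ {i, j}, x k * ((s k : ℝ)) with hR
      set a : ℝ := (1 + |R|) / p with ha
      set b : ℝ := (a * p + R) / q with hb
      have hap : a * p = 1 + |R| := by
        rw [ha, div_mul_cancel₀ _ hsp.ne']
      have haposR : 0 < a * p + R := by
        rw [hap]
        have := abs_nonneg R
        have := neg_abs_le R
        linarith
      have hapos : 0 < a := by
        rw [ha]
        apply div_pos _ hsp
        have := abs_nonneg R; linarith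
      have hbpos : 0 < b := div_pos haposR hsq
      have hbq : b * q = a * p + R := div_mul_cancel₀ _ hsq.ne'
      refine ⟨fun k => if k = i then a * ((s k : ℝ)) else if k = j then b * ((s k : ℝ)) else ((s k : ℝ)), ?_, ?_⟩
      · simp only [SetLike.mem_coe, LinearMap.mem_ker, dotF, LinearMap.coe_mk, AddHom.coe_mk]
        have hsub : ({i, j} : Finset (Fin n)) ⊆ Finset.univ := Finset.subset_univ _
        rw [← Finset.sum_sdiff hsub]
        have h2 : ∑ k ∈ ({i, j} : Finset (Fin n)),
            x k * (if k = i then a * ((s k : ℝ)) else if k = j then b * ((s k : ℝ)) else ((s k : ℝ)))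
            = a * p - b * q := by
          rw [Finset.sum_pair hij]
          rw [if_pos rfl, if_neg (Ne.symm hij), if_pos rfl]
          rw [hp, hq]; ring
        have h1 : ∑ k ∈ Finset.univ \ ({i, j} : Finset (Fin n)),
            x k * (if k = i then a * ((s k : ℝ)) else if k = j then b * ((s k : ℝ)) else ((s k : ℝ)))
            = R := by
          rw [hR]
          apply Finset.sum_congr rfl
          intro k hk
          simp only [Finset.mem_sdiff, Finset.mem_insert, Finset.mem_singleton] at hk
          push_neg at hk
          rw [if_neg hk.2.1, if_neg hk.2.2]
        rw [h1, h2, hbq]; ring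
      · funext k
        simp only [signVec]
        by_cases hki : k = i
        · subst hki
          rw [if_pos rfl, sign_mul, sign_pos hapos, one_mul, sign_coe_signType]
        · by_cases hkj : k = j
          · subst hkj
            rw [if_neg hki, if_pos rfl, sign_mul, sign_pos hbpos, one_mul, sign_coe_signType]
          · rw [if_neg hki, if_neg hkj, sign_coe_signType]

lemma st1 : ∀ a b : SignType, b ≠ 0 → (¬(a = b ∧ a ≠ 0) ↔ a = 0 ∨ a = -b) := by decide
lemma st2 : ∀ a b : SignType, b ≠ 0 → (¬(a = -b ∧ a ≠ 0) ↔ a = 0 ∨ a = b) := by decide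
lemma st3 : ∀ a b : SignType, b ≠ 0 → a = b → a = -b → False := by decide
lemma st5 : ∀ a : SignType, a ≠ 0 → ¬((0:SignType) = -a) := by decide
lemma st4 : ∀ a b : SignType, b ≠ 0 → ((a = 0 ∨ a = b) ∧ (a = 0 ∨ a = -b) ↔ a = 0) := by decide

lemma not_scond_iff {n : ℕ} (x : Fin n → ℝ) (s : Fin n → SignType) :
    ¬ Scond x s ↔ ((∃ i, x i ≠ 0 ∧ s i ≠ 0) ∧
      ((∀ i, x i ≠ 0 → s i = 0 ∨ s i = SignType.sign (x i)) ∨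
       (∀ i, x i ≠ 0 → s i = 0 ∨ s i = -SignType.sign (x i)))) := by
  rw [Scond, not_or]
  constructor
  · rintro ⟨h1, h2⟩
    push_neg at h1
    refine ⟨h1, ?_⟩
    by_cases hA : ∃ i, s i = SignType.sign (x i) ∧ s i ≠ 0
    · left
      intro j hxj
      have hB : ¬ (s j = -SignType.sign (x j) ∧ s j ≠ 0) := by
        intro hBj
        obtain ⟨i, hAi⟩ := hA
        exact h2 ⟨i, j, hAi.1, hAi.2, hBj.1, hBj.2⟩
      exact (st2 (s j) (SignType.sign (x j)) (sign_ne_zero.2 hxj)).1 hB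
    · right
      intro i hxi
      have hAi : ¬ (s i = SignType.sign (x i) ∧ s i ≠ 0) := fun h => hA ⟨i, h⟩
      exact (st1 (s i) (SignType.sign (x i)) (sign_ne_zero.2 hxi)).1 hAi
  · rintro ⟨⟨i0, hx0, hs0⟩, h⟩
    refine ⟨fun hall => hs0 (hall i0 hx0), ?_⟩
    rintro ⟨i, j, hA1, hA2, hB1, hB2⟩
    rcases h with h | h
    · have hxj : x j ≠ 0 := by
        intro hxj; rw [hxj] at hB1; simp at hB1; exact hB2 hB1
      rcases h j hxj with h0 | hsj
      · exact hB2 h0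
      · exact st3 (s j) (SignType.sign (x j)) (sign_ne_zero.2 hxj) hsj hB1
    · have hxi : x i ≠ 0 := by
        intro hxi; rw [hxi] at hA1; simp at hA1; exact hA2 hA1
      rcases h i hxi with h0 | hsi
      · exact hA2 h0
      · exact st3 (s i) (SignType.sign (x i)) (sign_ne_zero.2 hxi) hA1 hsi

lemma ncard_Scond {n : ℕ} (x : Fin n → ℝ) :
    {s : Fin n → SignType | Scond x s}.ncard
      + 2 * (3 ^ (Finset.univ.filter fun i => x i = 0).card
              * 2 ^ (Finset.univ.filter fun i => x i ≠ 0).card)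
    = 3 ^ n + 2 * 3 ^ (Finset.univ.filter fun i => x i = 0).card := by
  classical
  set k := (Finset.univ.filter fun i => x i = 0).card with hk
  set t := (Finset.univ.filter fun i => x i ≠ 0).card with ht
  set Cpos : Finset (Fin n → SignType) := Fintype.piFinset
    (fun i => if x i = 0 then Finset.univ else {0, SignType.sign (x i)}) with hCpos
  set Cneg : Finset (Fin n → SignType) := Fintype.piFinset
    (fun i => if x i = 0 then Finset.univ else {0, -SignType.sign (x i)}) with hCneg
  set Z : Finset (Fin n → SignType) := Fintype.piFinset
    (fun i => if x i = 0 then Finset.univ else {0}) with hZ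
  have memCpos : ∀ s, s ∈ Cpos ↔ ∀ i, x i ≠ 0 → s i = 0 ∨ s i = SignType.sign (x i) := by
    intro s
    rw [hCpos, Fintype.mem_piFinset]
    constructor
    · intro h i hxi
      have := h i
      rw [if_neg hxi] at this
      simpa using this
    · intro h i
      by_cases hxi : x i = 0
      · simp [hxi]
      · rw [if_neg hxi]; simpa using h i hxi
  have memCneg : ∀ s, s ∈ Cneg ↔ ∀ i, x i ≠ 0 → s i = 0 ∨ s i = -SignType.sign (x i) := by
    intro s
    rw [hCneg, Fintype.mem_piFinset]
    constructor
    · intro h i hxi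
      have := h i
      rw [if_neg hxi] at this
      simpa using this
    · intro h i
      by_cases hxi : x i = 0
      · simp [hxi]
      · rw [if_neg hxi]; simpa using h i hxi
  have memZ : ∀ s, s ∈ Z ↔ ∀ i, x i ≠ 0 → s i = 0 := by
    intro s
    rw [hZ, Fintype.mem_piFinset]
    constructor
    · intro h i hxi
      have := h i
      rw [if_neg hxi] at this
      simpa using this
    · intro h i
      by_cases hxi : x i = 0
      · simp [hxi]
      · rw [if_neg hxi]; simpa using h i hxi
  have hZsub : Z ⊆ Cpos ∪ Cneg := by
    intro s hs
    apply Finset.mem_union_left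
    rw [memCpos]
    intro i hxi
    exact Or.inl ((memZ s).1 hs i hxi)
  have hinter : Cpos ∩ Cneg = Z := by
    ext s
    rw [Finset.mem_inter, memCpos, memCneg, memZ]
    constructor
    · rintro ⟨h1, h2⟩ i hxi
      exact (st4 (s i) (SignType.sign (x i)) (sign_ne_zero.2 hxi)).1 ⟨h1 i hxi, h2 i hxi⟩
    · intro h
      exact ⟨fun i hxi => Or.inl (h i hxi), fun i hxi => Or.inl (h i hxi)⟩
  have hBad : Finset.univ.filter (fun s => ¬ Scond x s) = (Cpos ∪ Cneg) \ Z := by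
    ext s
    rw [Finset.mem_filter, Finset.mem_sdiff, Finset.mem_union, memCpos, memCneg, memZ,
      not_scond_iff]
    constructor
    · rintro ⟨-, ⟨i0, hx0, hs0⟩, h⟩
      exact ⟨h.imp id id, fun hz => hs0 (hz i0 hx0)⟩
    · rintro ⟨h, hz⟩
      push_neg at hz
      exact ⟨Finset.mem_univ _, hz, h⟩
  have cardCpos : Cpos.card = 3 ^ k * 2 ^ t := by
    rw [hCpos, Fintype.card_piFinset]
    have : ∀ i, (if x i = 0 then (Finset.univ : Finset SignType)
        else {0, SignType.sign (x i)}).card = if x i = 0 then 3 else 2 := by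
      intro i
      by_cases hxi : x i = 0
      · simp [hxi, SignType.univ_eq]
      · rw [if_neg hxi, if_neg hxi]
        rw [Finset.card_insert_of_notMem (by simp [Ne.symm (sign_ne_zero.2 hxi)]),
          Finset.card_singleton]
    rw [Finset.prod_congr rfl (fun i _ => this i), Finset.prod_ite, Finset.prod_const,
      Finset.prod_const, hk, ht]
  have cardCneg : Cneg.card = 3 ^ k * 2 ^ t := by
    rw [hCneg, Fintype.card_piFinset]
    have : ∀ i, (if x i = 0 then (Finset.univ : Finset SignType)
        else {0, -SignType.sign (x i)}).card = if x i = 0 then 3 else 2 := by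
      intro i
      by_cases hxi : x i = 0
      · simp [hxi, SignType.univ_eq]
      · rw [if_neg hxi, if_neg hxi]
        rw [Finset.card_insert_of_notMem
          (by simp only [Finset.mem_singleton]
              exact st5 _ (sign_ne_zero.2 hxi)),
          Finset.card_singleton]
    rw [Finset.prod_congr rfl (fun i _ => this i), Finset.prod_ite, Finset.prod_const,
      Finset.prod_const, hk, ht]
  have cardZ : Z.card = 3 ^ k := by
    rw [hZ, Fintype.card_piFinset]
    have : ∀ i, (if x i = 0 then (Finset.univ : Finset SignType)
        else ({0} : Finset SignType)).card = if x i = 0 then 3 else 1 := by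
      intro i
      by_cases hxi : x i = 0
      · simp [hxi, SignType.univ_eq]
      · simp [hxi]
    rw [Finset.prod_congr rfl (fun i _ => this i), Finset.prod_ite, Finset.prod_const,
      Finset.prod_const, hk, one_pow, mul_one]
  have hGoodBad : (Finset.univ.filter (fun s => Scond x s)).card
      + (Finset.univ.filter (fun s => ¬ Scond x s)).card = 3 ^ n := by
    rw [Finset.card_filter_add_card_filter_not]
    have h3 : Fintype.card SignType = 3 := rfl
    rw [Finset.card_univ, Fintype.card_fun, h3, Fintype.card_fin]
  have hsd : ((Cpos ∪ Cneg) \ Z).card + Z.card = (Cpos ∪ Cneg).card :=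
    Finset.card_sdiff_add_card_eq_card hZsub
  have hun : (Cpos ∪ Cneg).card + (Cpos ∩ Cneg).card = Cpos.card + Cneg.card :=
    Finset.card_union_add_card_inter _ _
  have hset : {s : Fin n → SignType | Scond x s} = ↑(Finset.univ.filter (fun s => Scond x s)) := by
    ext s; simp
  rw [hset, Set.ncard_coe_finset]
  rw [hBad] at hGoodBad
  rw [hinter, cardZ, cardCpos, cardCneg] at hun
  rw [cardZ] at hsd
  omega

lemma dotF_apply {n : ℕ} (x v : Fin n → ℝ) : dotF x v = ∑ i, x i * v i := rfl

lemma arith1 : ∀ k t : ℕ, 1 ≤ t → 2 ^ (k + t) ≤ 3 ^ k * (2 ^ t - 1) + 1 := by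
  intro k
  induction k with
  | zero => intro t ht; simp; have : 1 ≤ 2 ^ t := Nat.one_le_two_pow; omega
  | succ k ih =>
    intro t ht
    have h1 := ih t ht
    have h2 : 1 ≤ 2 ^ (k + t) := Nat.one_le_two_pow
    have h2t : 2 ≤ 2 ^ t := by
      have := Nat.pow_le_pow_right (by norm_num : 1 ≤ 2) ht
      simpa using this
    have hb : 1 ≤ 3 ^ k * (2 ^ t - 1) :=
      Nat.one_le_iff_ne_zero.2 (Nat.mul_ne_zero (by positivity) (by omega))
    have e1 : 2 ^ (k + 1 + t) = 2 * 2 ^ (k + t) := by ring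
    have e2 : 3 ^ (k + 1) * (2 ^ t - 1) = 3 * (3 ^ k * (2 ^ t - 1)) := by ring
    omega

lemma arith2 : ∀ t : ℕ, 1 ≤ t → 2 ^ t ≤ 3 ^ (t - 1) + 1 := by
  intro t ht
  induction t with
  | zero => omega
  | succ t ih =>
    rcases Nat.eq_or_lt_of_le ht with h | h
    · simp [← h]
    · have ht' : 1 ≤ t := by omega
      have := ih ht'
      have e1 : 2 ^ (t + 1) = 2 * 2 ^ t := by ring
      have e2 : 3 ^ (t + 1 - 1) = 3 * 3 ^ (t - 1) := by
        rw [Nat.add_sub_cancel]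
        conv_lhs => rw [show t = t - 1 + 1 by omega]
        ring
      have h3 : 1 ≤ 3 ^ (t - 1) := Nat.one_le_pow _ _ (by omega)
      omega

lemma dotF_ne_zero {n : ℕ} {x : Fin n → ℝ} (hx : x ≠ 0) : dotF x ≠ 0 := by
  obtain ⟨i0, hi0⟩ : ∃ i, x i ≠ 0 := by
    by_contra h; push_neg at h; exact hx (funext h)
  intro h
  have h2 : dotF x (Pi.single i0 1) = 0 := by rw [h]; simp
  rw [dotF_apply] at h2
  simp only [Pi.single_apply, mul_ite, mul_one, mul_zero,
    Finset.sum_ite_eq', Finset.mem_univ, if_true] at h2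
  exact hi0 h2

lemma finrank_ker_dotF {n : ℕ} {x : Fin n → ℝ} (hx : x ≠ 0) :
    Module.finrank ℝ (LinearMap.ker (dotF x)) = n - 1 := by
  have h := Module.Dual.finrank_ker_add_one_of_ne_zero (dotF_ne_zero hx)
  rw [Module.finrank_fintype_fun_eq_card, Fintype.card_fin] at h
  omega

lemma exists_dotF_of_hyperplane {n : ℕ} (hn : 1 ≤ n) (L : Submodule ℝ (Fin n → ℝ))
    (hL : Module.finrank ℝ L = n - 1) : ∃ x : Fin n → ℝ, x ≠ 0 ∧ L = LinearMap.ker (dotF x) := by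
  have hLne : L ≠ ⊤ := by
    intro h
    rw [h, finrank_top, Module.finrank_fintype_fun_eq_card, Fintype.card_fin] at hL
    omega
  obtain ⟨f, hf0, hfL⟩ := Submodule.exists_dual_map_eq_bot_of_lt_top (lt_top_iff_ne_top.2 hLne)
    inferInstance
  set x : Fin n → ℝ := fun i => f (fun j => if i = j then 1 else 0) with hxdef
  have hfx : dotF x = f := by
    apply LinearMap.ext
    intro v
    rw [dotF_apply]
    conv_rhs => rw [pi_eq_sum_univ v]
    rw [map_sum]
    apply Finset.sum_congr rfl
    intro i _
    rw [_root_.map_smul, smul_eq_mul, mul_comm]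
  have hx0 : x ≠ 0 := by
    intro h
    apply hf0
    rw [← hfx, h]
    apply LinearMap.ext
    intro v
    rw [dotF_apply]
    simp
  refine ⟨x, hx0, ?_⟩
  have hle : L ≤ LinearMap.ker f := by
    intro v hv
    rw [LinearMap.mem_ker]
    have : f v ∈ L.map f := Submodule.mem_map_of_mem hv
    rwa [hfL, Submodule.mem_bot] at this
  rw [hfx]
  refine Submodule.eq_of_le_of_finrank_le hle ?_
  rw [hL]
  have := Module.Dual.finrank_ker_add_one_of_ne_zero hf0
  rw [Module.finrank_fintype_fun_eq_card, Fintype.card_fin] at this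
  omega

theorem stmt_13 {n : ℕ} (hn : 2 ≤ n) :
    IsGreatest {c : ℕ | ∃ L : Submodule ℝ (Fin n → ℝ),
        Module.finrank ℝ L = n - 1 ∧ (signSet L).ncard = c} (3 ^ n - 2 * (2 ^ n - 1)) ∧
    IsLeast {c : ℕ | ∃ L : Submodule ℝ (Fin n → ℝ),
        Module.finrank ℝ L = n - 1 ∧ (signSet L).ncard = c} (3 ^ (n - 1)) := by
  have h3n : (3:ℕ) ^ n = 3 * 3 ^ (n - 1) := by
    have h : n - 1 + 1 = n := by omega
    calc (3:ℕ) ^ n = 3 ^ (n - 1 + 1) := by rw [h]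
    _ = 3 * 3 ^ (n - 1) := by rw [pow_succ]; ring
  -- key computation for arbitrary hyperplane
  have key : ∀ L : Submodule ℝ (Fin n → ℝ), Module.finrank ℝ L = n - 1 →
      ∃ t : ℕ, 1 ≤ t ∧ t ≤ n ∧
        (signSet L).ncard + 2 * (3 ^ (n - t) * (2 ^ t - 1)) = 3 ^ n := by
    intro L hL
    obtain ⟨x, hx0, rfl⟩ := exists_dotF_of_hyperplane (by omega) L hL
    set t := (Finset.univ.filter fun i => x i ≠ 0).card with htd
    set k := (Finset.univ.filter fun i => x i = 0).card with hkd
    have hkt : k + t = n := by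
      have h := Finset.card_filter_add_card_filter_not
        (s := (Finset.univ : Finset (Fin n))) (p := fun i => x i = 0)
      simp only [Finset.card_univ, Fintype.card_fin] at h
      rw [hkd, htd]
      convert h using 3
    have ht1 : 1 ≤ t := by
      obtain ⟨i0, hi0⟩ : ∃ i, x i ≠ 0 := by
        by_contra h; push_neg at h; exact hx0 (funext h)
      have hmem : i0 ∈ Finset.univ.filter (fun i => x i ≠ 0) :=
        Finset.mem_filter.2 ⟨Finset.mem_univ _, hi0⟩
      rw [htd]
      exact Finset.card_pos.2 ⟨i0, hmem⟩
    have hsetEq : signSet (LinearMap.ker (dotF x)) = {s | Scond x s} :=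
      Set.ext (mem_signSet_ker x)
    have heq := ncard_Scond x
    rw [← hkd, ← htd] at heq
    refine ⟨t, ht1, by omega, ?_⟩
    rw [hsetEq]
    have hnk : n - t = k := by omega
    rw [hnk]
    have h1 : 1 ≤ 2 ^ t := Nat.one_le_two_pow
    have hmul : 3 ^ k * 2 ^ t = 3 ^ k * (2 ^ t - 1) + 3 ^ k := by
      conv_lhs => rw [show (2:ℕ) ^ t = (2 ^ t - 1) + 1 from by omega]
      rw [Nat.mul_add, mul_one]
    omega
  -- upper bound
  have hub : ∀ c ∈ {c : ℕ | ∃ L : Submodule ℝ (Fin n → ℝ),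
      Module.finrank ℝ L = n - 1 ∧ (signSet L).ncard = c}, c ≤ 3 ^ n - 2 * (2 ^ n - 1) := by
    rintro c ⟨L, hL, hc⟩
    obtain ⟨t, ht1, htn, heq⟩ := key L hL
    rw [hc] at heq
    have ha := arith1 (n - t) t ht1
    rw [show n - t + t = n from by omega] at ha
    have h1 : 1 ≤ 2 ^ n := Nat.one_le_two_pow
    omega
  -- lower bound
  have hlb : ∀ c ∈ {c : ℕ | ∃ L : Submodule ℝ (Fin n → ℝ),
      Module.finrank ℝ L = n - 1 ∧ (signSet L).ncard = c}, 3 ^ (n - 1) ≤ c := by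
    rintro c ⟨L, hL, hc⟩
    obtain ⟨t, ht1, htn, heq⟩ := key L hL
    rw [hc] at heq
    have ha := arith2 t ht1
    have hD : 3 ^ (n - t) * (2 ^ t - 1) ≤ 3 ^ (n - t) * 3 ^ (t - 1) := by
      exact Nat.mul_le_mul (Nat.le_refl _) (Nat.sub_le_of_le_add ha)
    have hpow : 3 ^ (n - t) * 3 ^ (t - 1) = 3 ^ (n - 1) := by
      rw [← pow_add]; congr 1; omega
    rw [hpow] at hD
    omega
  constructor
  · constructor
    · -- max attained by x = all ones
      set x1 : Fin n → ℝ := fun _ => 1 with hx1d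
      have hx1 : x1 ≠ 0 := by
        intro h
        have := congrFun h ⟨0, by omega⟩
        norm_num [hx1d] at this
      refine ⟨LinearMap.ker (dotF x1), finrank_ker_dotF hx1, ?_⟩
      have hsetEq : signSet (LinearMap.ker (dotF x1)) = {s | Scond x1 s} :=
        Set.ext (mem_signSet_ker x1)
      have heq := ncard_Scond x1
      have hk0 : (Finset.univ.filter fun i => x1 i = 0).card = 0 := by
        rw [Finset.card_eq_zero]
        apply Finset.filter_false_of_mem
        intro i _
        norm_num [hx1d]
      have ht0 : (Finset.univ.filter fun i => x1 i ≠ 0).card = n := by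
        rw [Finset.filter_true_of_mem (fun i _ => by norm_num [hx1d]),
          Finset.card_univ, Fintype.card_fin]
      rw [hk0, ht0] at heq
      rw [hsetEq]
      have h1 : 1 ≤ 2 ^ n := Nat.one_le_two_pow
      simp only [pow_zero, one_mul, mul_one] at heq
      omega
    · exact hub
  · constructor
    · -- min attained by x = e_0
      set i0 : Fin n := ⟨0, by omega⟩ with hi0d
      set x2 : Fin n → ℝ := Pi.single i0 1 with hx2d
      have hx2 : x2 ≠ 0 := by
        intro h
        have := congrFun h i0
        rw [hx2d] at this
        simp at this
      refine ⟨LinearMap.ker (dotF x2), finrank_ker_dotF hx2, ?_⟩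
      have hsetEq : signSet (LinearMap.ker (dotF x2)) = {s | Scond x2 s} :=
        Set.ext (mem_signSet_ker x2)
      have heq := ncard_Scond x2
      have hmemiff : ∀ i, x2 i ≠ 0 ↔ i = i0 := by
        intro i
        rw [hx2d, Pi.single_apply]
        split_ifs with h
        · simp [h]
        · simp [h]
      have ht1 : (Finset.univ.filter fun i => x2 i ≠ 0).card = 1 := by
        have : (Finset.univ.filter fun i => x2 i ≠ 0) = {i0} := by
          ext i
          simp only [Finset.mem_filter, Finset.mem_univ, true_and, Finset.mem_singleton]
          exact hmemiff i
        rw [this, Finset.card_singleton]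
      have hkt : (Finset.univ.filter fun i => x2 i = 0).card
          + (Finset.univ.filter fun i => x2 i ≠ 0).card = n := by
        have h := Finset.card_filter_add_card_filter_not
          (s := (Finset.univ : Finset (Fin n))) (p := fun i => x2 i = 0)
        simp only [Finset.card_univ, Fintype.card_fin] at h
        convert h using 3
      have hk1 : (Finset.univ.filter fun i => x2 i = 0).card = n - 1 := by omega
      rw [ht1, hk1] at heq
      rw [hsetEq]
      rw [pow_one] at heq
      omega
    · exact hlb
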